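/- Let m_r, m_b > 0. For all real s, s₀ < 0, the subtracted dispersion relation holds: B₂(s) − B₂(s₀) = (s₀ − s) · ∫_{(m_r+m_b)²}^{∞} √(λ(x, m_r², m_b²)) / (x·(x − s)·(x − s₀)) dx, where the integral on the right converges. That is, the renormalized bubble amplitude is recovered from its variation along the cut [(m_r+m_b)², ∞) by a once-subtracted dispersion integral. -/

import Mathlib

open MeasureTheory Filter Set Topology

/-- The Källén function λ(a,b,c) := a² + b² + c² − 2(ab + bc + ca). -/
noncomputable def kallen (a b c : ℝ) : ℝ := a ^ 2 + b ^ 2 + c ^ 2 - 2 * (a * b + b * c + c * a)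

/-- The subtracted bubble function on the principal sheet:
`B₂(s) = (√λ/(2s))·ln((m_r²+m_b²−s−√λ)/(m_r²+m_b²−s+√λ)) + ((m_r²−m_b²)/(2s))·ln(m_r²/m_b²)`,
with `λ = λ(s, m_r², m_b²)`. -/
noncomputable def B2 (m_r m_b s : ℝ) : ℝ :=
  Real.sqrt (kallen s (m_r ^ 2) (m_b ^ 2)) / (2 * s) *
      Real.log ((m_r ^ 2 + m_b ^ 2 - s - Real.sqrt (kallen s (m_r ^ 2) (m_b ^ 2))) /
        (m_r ^ 2 + m_b ^ 2 - s + Real.sqrt (kallen s (m_r ^ 2) (m_b ^ 2)))) +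
    (m_r ^ 2 - m_b ^ 2) / (2 * s) * Real.log (m_r ^ 2 / m_b ^ 2)

/-- auxiliary antiderivative for the dispersion integral -/
noncomputable def gfun (p q c x : ℝ) : ℝ :=
  Real.log (((p + q - 2*c) * (x - c) - 2*((c - p)*(c - q))
      + 2 * Real.sqrt ((c - p)*(c - q)) * Real.sqrt ((x - p)*(x - q))) / (x - c))

lemma lamc_nonneg {p q c : ℝ} (hq : 0 ≤ q) (hqp : q < p) (hc : c ≤ 0) :
    0 ≤ (c - p) * (c - q) := by
  nlinarith

lemma num_pos {p q c x : ℝ} (hq : 0 ≤ q) (hqp : q < p) (hc : c ≤ 0) (hx : p ≤ x) :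
    0 < (p + q - 2*c) * (x - c) - 2*((c - p)*(c - q))
      + 2 * Real.sqrt ((c - p)*(c - q)) * Real.sqrt ((x - p)*(x - q)) := by
  have h1 : 0 ≤ 2 * Real.sqrt ((c - p)*(c - q)) * Real.sqrt ((x - p)*(x - q)) := by
    positivity
  nlinarith [mul_le_mul_of_nonneg_left (show p - c ≤ x - c by linarith)
    (show (0:ℝ) ≤ p + q - 2*c by linarith)]

lemma gfun_at_p {p q c : ℝ} (hq : 0 ≤ q) (hqp : q < p) (hc : c ≤ 0) :
    gfun p q c p = Real.log (p - q) := by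
  have hpc : p - c ≠ 0 := by intro h; nlinarith
  have h0 : Real.sqrt ((p - p)*(p - q)) = 0 := by
    simp
  rw [gfun, h0]
  congr 1
  field_simp
  ring

lemma gfun_deriv {p q c x : ℝ} (hq : 0 ≤ q) (hqp : q < p) (hc : c ≤ 0) (hx : p < x) :
    HasDerivAt (gfun p q c)
      (Real.sqrt ((c - p)*(c - q)) / ((x - c) * Real.sqrt ((x - p)*(x - q)))) x := by
  set L := Real.sqrt ((c - p)*(c - q)) with hLdef
  have hL0 : 0 ≤ L := Real.sqrt_nonneg _
  have hL2 : L^2 = (c - p)*(c - q) := Real.sq_sqrt (lamc_nonneg hq hqp hc)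
  have hlamx : 0 < (x - p)*(x - q) := by nlinarith
  set S := Real.sqrt ((x - p)*(x - q)) with hSdef
  have hS : 0 < S := Real.sqrt_pos.mpr hlamx
  have hS2 : S^2 = (x - p)*(x - q) := Real.sq_sqrt hlamx.le
  have hxc : 0 < x - c := by linarith
  -- derivative of inner sqrt
  have hpoly : HasDerivAt (fun y : ℝ => (y - p)*(y - q)) (2*x - p - q) x := by
    have := ((hasDerivAt_id x).sub_const p).mul ((hasDerivAt_id x).sub_const q)
    refine this.congr_deriv ?_; symm; simp only [id_eq]; ring
  have hsqrt : HasDerivAt (fun y : ℝ => Real.sqrt ((y - p)*(y - q)))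
      ((2*x - p - q) / (2 * S)) x := hpoly.sqrt (ne_of_gt hlamx)
  -- numerator
  have hnum : HasDerivAt (fun y : ℝ => (p + q - 2*c) * (y - c) - 2*((c - p)*(c - q))
      + 2 * L * Real.sqrt ((y - p)*(y - q)))
      ((p + q - 2*c) + 2 * L * ((2*x - p - q) / (2 * S))) x := by
    have h1 : HasDerivAt (fun y : ℝ => (p + q - 2*c) * (y - c)) (p + q - 2*c) x := by
      have := ((hasDerivAt_id x).sub_const c).const_mul (p + q - 2*c)
      refine this.congr_deriv ?_; symm; ring
    exact ((h1.sub_const _).add (hsqrt.const_mul (2*L)))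
  -- quotient
  have hquot : HasDerivAt (fun y : ℝ => ((p + q - 2*c) * (y - c) - 2*((c - p)*(c - q))
      + 2 * L * Real.sqrt ((y - p)*(y - q))) / (y - c))
      ((((p + q - 2*c) + 2 * L * ((2*x - p - q) / (2 * S))) * (x - c)
        - ((p + q - 2*c) * (x - c) - 2*((c - p)*(c - q)) + 2 * L * S) * 1) / (x - c)^2) x := by
    exact hnum.div ((hasDerivAt_id x).sub_const c) (ne_of_gt hxc)
  have hargpos := num_pos hq hqp hc hx.le
  rw [← hLdef, ← hSdef] at hargpos
  have harg : ((p + q - 2*c) * (x - c) - 2*((c - p)*(c - q)) + 2 * L * S) / (x - c) ≠ 0 :=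
    ne_of_gt (div_pos hargpos hxc)
  have := hquot.log harg
  refine this.congr_deriv ?_; symm
  rw [← hSdef]
  have hN : ((p + q - 2*c) * (x - c) - 2*((c - p)*(c - q)) + 2 * L * S) ≠ 0 := ne_of_gt hargpos
  have hA : (p + q - 2*c + 2*L*((2*x - p - q)/(2*S)))*(x - c)
      - ((p + q - 2*c)*(x - c) - 2*((c - p)*(c - q)) + 2*L*S)*1
      = L*((p + q - 2*c)*(x - c) - 2*((c - p)*(c - q)) + 2*L*S)/S := by
    have hD' : 2*L*((2*x - p - q)/(2*S))*S = L*(2*x - p - q) := by field_simp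
    rw [eq_div_iff hS.ne']
    linear_combination (x - c) * hD' - 2*L*hS2 - 2*S*hL2
  rw [hA]
  field_simp
  rw [mul_div_assoc, div_self (by intro h; apply hN; linarith), mul_one]

lemma gfun_continuousOn {p q c : ℝ} (hq : 0 ≤ q) (hqp : q < p) (hc : c ≤ 0) :
    ContinuousOn (gfun p q c) (Set.Ici p) := by
  have hp : 0 < p := lt_of_le_of_lt hq hqp
  apply ContinuousOn.log
  · apply ContinuousOn.div
    · fun_prop
    · fun_prop
    · intro x hx
      have : (0:ℝ) < x - c := by have := mem_Ici.mp hx; linarith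
      exact ne_of_gt this
  · intro x hx
    exact ne_of_gt (div_pos (num_pos hq hqp hc (mem_Ici.mp hx))
      (by have := mem_Ici.mp hx; linarith))

lemma gfun_tendsto {p q c : ℝ} (hq : 0 ≤ q) (hqp : q < p) (hc : c ≤ 0) :
    Tendsto (gfun p q c) atTop
      (𝓝 (Real.log ((Real.sqrt (p - c) + Real.sqrt (q - c))^2))) := by
  have hp : 0 < p := lt_of_le_of_lt hq hqp
  set L := Real.sqrt ((c - p)*(c - q)) with hLdef
  have hL : L = Real.sqrt (p - c) * Real.sqrt (q - c) := by
    rw [hLdef, show (c - p)*(c - q) = (p - c)*(q - c) by ring,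
      Real.sqrt_mul (by linarith)]
  -- the auxiliary form
  have hratio : Tendsto (fun x : ℝ => (p + q - 2*c) - 2*((c - p)*(c - q)) * (x - c)⁻¹
      + 2 * L * Real.sqrt ((1 - (p - c) * (x - c)⁻¹) * (1 - (q - c) * (x - c)⁻¹)))
      atTop (𝓝 ((p + q - 2*c) + 2 * L)) := by
    have hinv : Tendsto (fun x : ℝ => (x - c)⁻¹) atTop (𝓝 0) := by
      apply Tendsto.inv_tendsto_atTop
      exact tendsto_atTop_add_const_right _ _ tendsto_id
    have h1 : Tendsto (fun x : ℝ => (1 - (p - c) * (x - c)⁻¹) * (1 - (q - c) * (x - c)⁻¹))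
        atTop (𝓝 1) := by
      have := ((tendsto_const_nhds (x := (1:ℝ))).sub (hinv.const_mul (p - c))).mul
        ((tendsto_const_nhds (x := (1:ℝ))).sub (hinv.const_mul (q - c)))
      simpa using this
    have h2 : Tendsto (fun x : ℝ => Real.sqrt ((1 - (p - c) * (x - c)⁻¹) * (1 - (q - c) * (x - c)⁻¹)))
        atTop (𝓝 1) := by
      have := (Real.continuous_sqrt.tendsto 1).comp h1
      simpa only [Function.comp_def, Real.sqrt_one] using this
    have := ((tendsto_const_nhds (x := (p + q - 2*c))).sub
        (hinv.const_mul (2*((c - p)*(c - q))))).add ((h2.const_mul (2*L)))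
    convert this using 2 <;> ring
  have heq : ∀ᶠ x in atTop, ((p + q - 2*c) - 2*((c - p)*(c - q)) * (x - c)⁻¹
      + 2 * L * Real.sqrt ((1 - (p - c) * (x - c)⁻¹) * (1 - (q - c) * (x - c)⁻¹)))
      = ((p + q - 2*c) * (x - c) - 2*((c - p)*(c - q))
      + 2 * L * Real.sqrt ((x - p)*(x - q))) / (x - c) := by
    filter_upwards [eventually_gt_atTop p] with x hx
    have hxc : 0 < x - c := by linarith
    have hsq : Real.sqrt ((1 - (p - c) * (x - c)⁻¹) * (1 - (q - c) * (x - c)⁻¹))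
        = Real.sqrt ((x - p)*(x - q)) / (x - c) := by
      rw [show (1 - (p - c) * (x - c)⁻¹) * (1 - (q - c) * (x - c)⁻¹)
          = ((x - p)*(x - q)) / (x - c)^2 by rw [eq_div_iff (by positivity)]; field_simp; ring,
        Real.sqrt_div (by nlinarith : (0:ℝ) ≤ (x - p)*(x - q)), Real.sqrt_sq hxc.le]
    rw [hsq]
    field_simp
  have harglim : Tendsto (fun x : ℝ => ((p + q - 2*c) * (x - c) - 2*((c - p)*(c - q))
      + 2 * L * Real.sqrt ((x - p)*(x - q))) / (x - c)) atTop (𝓝 ((p + q - 2*c) + 2 * L)) :=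
    hratio.congr' heq
  have hpos : (0:ℝ) < (p + q - 2*c) + 2 * L := by
    have : 0 ≤ L := Real.sqrt_nonneg _
    nlinarith
  have hlog := harglim.log (ne_of_gt hpos)
  have hu : Real.sqrt (p - c)^2 = p - c := Real.sq_sqrt (by linarith)
  have hv : Real.sqrt (q - c)^2 = q - c := Real.sq_sqrt (by linarith)
  have hval : (Real.sqrt (p - c) + Real.sqrt (q - c))^2 = (p + q - 2*c) + 2 * L := by
    rw [hL]; linear_combination hu + hv
  rw [hval]
  exact hlog

lemma B2_eval (m_r m_b s : ℝ) (hr : 0 < m_r) (hb : 0 < m_b) (hs : s < 0) :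
    B2 m_r m_b s =
      Real.sqrt ((m_r + m_b)^2 - s) * Real.sqrt ((m_r - m_b)^2 - s) / s *
        (Real.log (Real.sqrt ((m_r + m_b)^2 - s) - Real.sqrt ((m_r - m_b)^2 - s)) -
         Real.log (Real.sqrt ((m_r + m_b)^2 - s) + Real.sqrt ((m_r - m_b)^2 - s))) +
      Real.sqrt ((m_r + m_b)^2) * Real.sqrt ((m_r - m_b)^2) / s *
        (Real.log (Real.sqrt ((m_r + m_b)^2) + Real.sqrt ((m_r - m_b)^2)) -
         Real.log (Real.sqrt ((m_r + m_b)^2) - Real.sqrt ((m_r - m_b)^2))) := by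
  have hu : (0:ℝ) < (m_r + m_b)^2 - s := by nlinarith
  have hv : (0:ℝ) < (m_r - m_b)^2 - s := by nlinarith
  set SU := Real.sqrt ((m_r + m_b)^2 - s) with hSU
  set SV := Real.sqrt ((m_r - m_b)^2 - s) with hSV
  have hSU2 : SU^2 = (m_r + m_b)^2 - s := Real.sq_sqrt hu.le
  have hSV2 : SV^2 = (m_r - m_b)^2 - s := Real.sq_sqrt hv.le
  have hSVpos : 0 < SV := Real.sqrt_pos.mpr hv
  have hVU : SV < SU := Real.sqrt_lt_sqrt hv.le (by nlinarith)
  -- first term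
  have hk : kallen s (m_r^2) (m_b^2) = ((m_r + m_b)^2 - s) * ((m_r - m_b)^2 - s) := by
    unfold kallen; ring
  have hsqk : Real.sqrt (kallen s (m_r^2) (m_b^2)) = SU * SV := by
    rw [hk, Real.sqrt_mul hu.le, hSU, hSV]
  have h1 : m_r^2 + m_b^2 - s - SU * SV = (SU - SV)^2 / 2 := by
    linear_combination -hSU2 / 2 - hSV2 / 2
  have h2 : m_r^2 + m_b^2 - s + SU * SV = (SU + SV)^2 / 2 := by
    linear_combination -hSU2 / 2 - hSV2 / 2
  have h3 : (m_r^2 + m_b^2 - s - SU * SV) / (m_r^2 + m_b^2 - s + SU * SV)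
      = ((SU - SV) / (SU + SV))^2 := by
    rw [h1, h2, div_pow]
    have : SU + SV ≠ 0 := by positivity
    field_simp
  have hlog1 : Real.log ((m_r^2 + m_b^2 - s - SU * SV) / (m_r^2 + m_b^2 - s + SU * SV))
      = 2 * (Real.log (SU - SV) - Real.log (SU + SV)) := by
    rw [h3]
    rw [show ((SU - SV)/(SU + SV))^2 = ((SU - SV)/(SU + SV))^(2:ℕ) by norm_num,
      Real.log_pow, Real.log_div (by nlinarith [hVU] : SU - SV ≠ 0) (by positivity)]
    push_cast
    ring
  -- second term
  have hmass : (m_r^2 - m_b^2) / (2*s) * Real.log (m_r^2 / m_b^2)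
      = Real.sqrt ((m_r + m_b)^2) * Real.sqrt ((m_r - m_b)^2) / s *
        (Real.log (Real.sqrt ((m_r + m_b)^2) + Real.sqrt ((m_r - m_b)^2)) -
         Real.log (Real.sqrt ((m_r + m_b)^2) - Real.sqrt ((m_r - m_b)^2))) := by
    have hSP : Real.sqrt ((m_r + m_b)^2) = m_r + m_b := Real.sqrt_sq (by positivity)
    have hlr : Real.log (m_r^2 / m_b^2) = 2 * Real.log m_r - 2 * Real.log m_b := by
      rw [Real.log_div (by positivity) (by positivity), Real.log_pow, Real.log_pow]
      push_cast; ring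
    rcases le_total m_b m_r with hmm | hmm
    · have hSQ : Real.sqrt ((m_r - m_b)^2) = m_r - m_b := Real.sqrt_sq (by linarith)
      rw [hSP, hSQ, hlr, show m_r + m_b + (m_r - m_b) = 2 * m_r by ring,
        show m_r + m_b - (m_r - m_b) = 2 * m_b by ring,
        Real.log_mul two_ne_zero hr.ne', Real.log_mul two_ne_zero hb.ne']
      ring
    · have hSQ : Real.sqrt ((m_r - m_b)^2) = m_b - m_r := by
        rw [Real.sqrt_sq_eq_abs, abs_of_nonpos (by linarith)]; ring
      rw [hSP, hSQ, hlr, show m_r + m_b + (m_b - m_r) = 2 * m_b by ring,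
        show m_r + m_b - (m_b - m_r) = 2 * m_r by ring,
        Real.log_mul two_ne_zero hr.ne', Real.log_mul two_ne_zero hb.ne']
      ring
  rw [B2, hsqk, hlog1, hmass]
  ring

set_option maxHeartbeats 1000000 in
/-- For `m_r, m_b > 0` and real `s, s₀ < 0`, the once-subtracted dispersion relation holds:
`B₂(s) − B₂(s₀) = (s₀ − s)·∫_{(m_r+m_b)²}^{∞} √λ(x, m_r², m_b²)/(x(x−s)(x−s₀)) dx`,
the integral being convergent: the renormalized bubble amplitude is recovered from its
variation along the cut `[(m_r+m_b)², ∞)` by a subtracted dispersion integral. -/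
theorem bubble_dispersion_relation (m_r m_b s s₀ : ℝ) (hr : 0 < m_r) (hb : 0 < m_b)
    (hs : s < 0) (hs₀ : s₀ < 0) :
    IntegrableOn
      (fun x : ℝ => Real.sqrt (kallen x (m_r ^ 2) (m_b ^ 2)) / (x * (x - s) * (x - s₀)))
      (Set.Ici ((m_r + m_b) ^ 2)) ∧
    B2 m_r m_b s - B2 m_r m_b s₀ =
      (s₀ - s) *
        ∫ x in Set.Ici ((m_r + m_b) ^ 2),
          Real.sqrt (kallen x (m_r ^ 2) (m_b ^ 2)) / (x * (x - s) * (x - s₀)) := by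
  obtain ⟨p, hpdef⟩ : ∃ p : ℝ, p = (m_r + m_b)^2 := ⟨_, rfl⟩
  obtain ⟨q, hqdef⟩ : ∃ q : ℝ, q = (m_r - m_b)^2 := ⟨_, rfl⟩
  rw [show ((m_r + m_b)^2 : ℝ) = p from hpdef.symm]
  have hq : 0 ≤ q := hqdef ▸ sq_nonneg _
  have hqp : q < p := by rw [hpdef, hqdef]; nlinarith
  have hp : 0 < p := lt_of_le_of_lt hq hqp
  have hk : ∀ x : ℝ, kallen x (m_r^2) (m_b^2) = (x - p) * (x - q) := by
    intro x; rw [hpdef, hqdef]; unfold kallen; ring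
  have hfeq : (fun x : ℝ => Real.sqrt (kallen x (m_r ^ 2) (m_b ^ 2)) / (x * (x - s) * (x - s₀)))
      = fun x : ℝ => Real.sqrt ((x - p) * (x - q)) / (x * (x - s) * (x - s₀)) := by
    funext x; rw [hk]
  set f : ℝ → ℝ := fun x : ℝ => Real.sqrt ((x - p) * (x - q)) / (x * (x - s) * (x - s₀))
    with hfdef
  -- continuity of the integrand on [p, ∞)
  have hcont : ContinuousOn f (Set.Ici p) := by
    apply ContinuousOn.div
    · fun_prop
    · fun_prop
    · intro x hx
      have hx' : p ≤ x := hx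
      have h1 : 0 < x := lt_of_lt_of_le hp hx'
      have h2 : 0 < x - s := by linarith
      have h3 : 0 < x - s₀ := by linarith
      positivity
  -- integrability
  have hint : IntegrableOn f (Set.Ioi p) := by
    have hbig : IntegrableOn (fun x : ℝ => x ^ (-2 : ℝ)) (Set.Ioi p) :=
      integrableOn_Ioi_rpow_of_lt (by norm_num) hp
    apply MeasureTheory.Integrable.mono hbig ((hcont.mono Set.Ioi_subset_Ici_self).aestronglyMeasurable measurableSet_Ioi)
    rw [ae_restrict_iff' measurableSet_Ioi]
    apply Filter.Eventually.of_forall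
    intro x hx
    have hx' : p < x := hx
    have hx0 : 0 < x := lt_trans hp hx'
    have h2 : 0 < x - s := by linarith
    have h3 : 0 < x - s₀ := by linarith
    have hrpow : x ^ (-2 : ℝ) = (x^2)⁻¹ := by
      rw [show (-2 : ℝ) = ((-2 : ℤ) : ℝ) by norm_num, Real.rpow_intCast, zpow_neg]
      norm_cast
    rw [Real.norm_eq_abs, Real.norm_eq_abs, hrpow, abs_of_nonneg (by positivity),
      abs_of_nonneg (by positivity)]
    have hsq : Real.sqrt ((x - p) * (x - q)) ≤ x := by
      calc Real.sqrt ((x - p) * (x - q)) ≤ Real.sqrt (x^2) := by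
            apply Real.sqrt_le_sqrt
            nlinarith [mul_le_mul_of_nonneg_left hx'.le (by linarith : (0:ℝ) ≤ p + q)]
        _ = x := Real.sqrt_sq hx0.le
    have hd : (x^2)⁻¹ * (x * (x - s) * (x - s₀)) = (x - s) * (x - s₀) / x := by
      field_simp
    rw [hfdef]
    simp only
    rw [div_le_iff₀ (by positivity), hd]
    calc Real.sqrt ((x - p) * (x - q)) ≤ x := hsq
      _ ≤ (x - s) * (x - s₀) / x := by
          rw [le_div_iff₀ hx0]; nlinarith
  have hintIci : IntegrableOn f (Set.Ici p) := by
    rwa [integrableOn_Ici_iff_integrableOn_Ioi]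
  rw [hfeq]
  refine ⟨hintIci, ?_⟩
  -- trivial case s = s₀
  rcases eq_or_ne s s₀ with rfl | hne
  · simp
  -- the antiderivative
  have hs0 : s ≠ 0 := hs.ne
  have hs₀0 : s₀ ≠ 0 := hs₀.ne
  have hss : s - s₀ ≠ 0 := sub_ne_zero.mpr hne
  obtain ⟨K1, hK1⟩ : ∃ k : ℝ, k = Real.sqrt ((0 - p) * (0 - q)) := ⟨_, rfl⟩
  obtain ⟨K2, hK2⟩ : ∃ k : ℝ, k = Real.sqrt ((s - p) * (s - q)) := ⟨_, rfl⟩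
  obtain ⟨K3, hK3⟩ : ∃ k : ℝ, k = Real.sqrt ((s₀ - p) * (s₀ - q)) := ⟨_, rfl⟩
  set c1 : ℝ := K1 / (s * s₀) with hc1
  set c2 : ℝ := K2 / (s * (s - s₀)) with hc2
  set c3 : ℝ := K3 / (s₀ * (s₀ - s)) with hc3
  set F : ℝ → ℝ := fun x => c1 * gfun p q 0 x + c2 * gfun p q s x + c3 * gfun p q s₀ x
    with hFdef
  have hFderiv : ∀ x ∈ Set.Ioi p, HasDerivAt F (f x) x := by
    intro x hx
    have hx' : p < x := hx
    have hx0 : 0 < x := lt_trans hp hx'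
    have d1 := (gfun_deriv hq hqp le_rfl hx').const_mul c1
    have d2 := (gfun_deriv hq hqp hs.le hx').const_mul c2
    have d3 := (gfun_deriv hq hqp hs₀.le hx').const_mul c3
    have hD := (d1.add d2).add d3
    set S := Real.sqrt ((x - p) * (x - q)) with hSdef
    have hlamx : 0 < (x - p) * (x - q) := by nlinarith
    have hS : 0 < S := Real.sqrt_pos.mpr hlamx
    have hS2 : S^2 = (x - p) * (x - q) := Real.sq_sqrt hlamx.le
    have hk1 : K1 * K1 = (0 - p) * (0 - q) := by
      rw [hK1]; exact Real.mul_self_sqrt (by nlinarith)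
    have hk2 : K2 * K2 = (s - p) * (s - q) := by
      rw [hK2]; exact Real.mul_self_sqrt (by nlinarith)
    have hk3 : K3 * K3 = (s₀ - p) * (s₀ - q) := by
      rw [hK3]; exact Real.mul_self_sqrt (by nlinarith)
    rw [← hK1, ← hK2, ← hK3] at hD
    refine hD.congr_deriv ?_; symm
    have h2 : (0:ℝ) < x - s := by linarith
    have h3 : (0:ℝ) < x - s₀ := by linarith
    have hfx : f x = ((x - p) * (x - q)) / (x * (x - s) * (x - s₀) * S) := by
      rw [hfdef]
      simp only
      rw [← hS2]
      rw [eq_div_iff (ne_of_gt (by positivity : (0:ℝ) < x * (x - s) * (x - s₀) * S))]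
      field_simp
      ring
      exact Real.sqrt_sq hS.le
    rw [hfx, hc1, hc2, hc3]
    have hss' : s₀ - s ≠ 0 := sub_ne_zero.mpr (Ne.symm hne)
    have hk1' : K1^2 = (0 - p) * (0 - q) := by rw [sq]; exact hk1
    have hk2' : K2^2 = (s - p) * (s - q) := by rw [sq]; exact hk2
    have hk3' : K3^2 = (s₀ - p) * (s₀ - q) := by rw [sq]; exact hk3
    field_simp [hs0, hs₀0, hss, hss', hx0.ne', h2.ne', h3.ne', hS.ne']
    ring_nf
    rw [hk1', hk2', hk3']
    ring
  -- continuity of F at p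
  have hFcont : ContinuousWithinAt F (Set.Ici p) p := by
    have : ContinuousOn F (Set.Ici p) := by
      apply ContinuousOn.add
      apply ContinuousOn.add
      · exact continuousOn_const.mul (gfun_continuousOn hq hqp le_rfl)
      · exact continuousOn_const.mul (gfun_continuousOn hq hqp hs.le)
      · exact continuousOn_const.mul (gfun_continuousOn hq hqp hs₀.le)
    exact this.continuousWithinAt Set.self_mem_Ici
  -- limit of F at infinity
  have hM : Filter.Tendsto F Filter.atTop
      (nhds (c1 * Real.log ((Real.sqrt p + Real.sqrt q)^2)
        + c2 * Real.log ((Real.sqrt (p - s) + Real.sqrt (q - s))^2)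
        + c3 * Real.log ((Real.sqrt (p - s₀) + Real.sqrt (q - s₀))^2))) := by
    have h1 := (gfun_tendsto hq hqp (le_refl (0:ℝ))).const_mul c1
    have h2 := (gfun_tendsto hq hqp hs.le).const_mul c2
    have h3 := (gfun_tendsto hq hqp hs₀.le).const_mul c3
    simp only [sub_zero] at h1
    exact (h1.add h2).add h3
  have hIoi := integral_Ioi_of_hasDerivAt_of_tendsto hFcont hFderiv hint hM
  have hFp : F p = c1 * Real.log (p - q) + c2 * Real.log (p - q) + c3 * Real.log (p - q) := by
    rw [hFdef]
    simp only
    rw [gfun_at_p hq hqp le_rfl, gfun_at_p hq hqp hs.le, gfun_at_p hq hqp hs₀.le]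
  rw [MeasureTheory.integral_Ici_eq_integral_Ioi, hIoi, hFp]
  -- evaluate B2 at s and s₀
  have hB2s := B2_eval m_r m_b s hr hb hs
  have hB2s₀ := B2_eval m_r m_b s₀ hr hb hs₀
  rw [← hpdef, ← hqdef] at hB2s hB2s₀
  rw [hB2s, hB2s₀]
  -- sqrt atoms
  have hSPpos : 0 < Real.sqrt p := Real.sqrt_pos.mpr hp
  have hSQP : Real.sqrt q < Real.sqrt p := Real.sqrt_lt_sqrt hq hqp
  have hSUs : Real.sqrt (q - s) < Real.sqrt (p - s) := Real.sqrt_lt_sqrt (by linarith) (by linarith)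
  have hSUs₀ : Real.sqrt (q - s₀) < Real.sqrt (p - s₀) := Real.sqrt_lt_sqrt (by linarith) (by linarith)
  have hSVpos : 0 < Real.sqrt (q - s) := Real.sqrt_pos.mpr (by linarith)
  have hSXpos : 0 < Real.sqrt (q - s₀) := Real.sqrt_pos.mpr (by linarith)
  -- K identities
  have hK1' : K1 = Real.sqrt p * Real.sqrt q := by
    rw [hK1, show (0 - p) * (0 - q) = p * q by ring, Real.sqrt_mul hp.le]
  have hK2' : K2 = Real.sqrt (p - s) * Real.sqrt (q - s) := by
    rw [hK2, show (s - p) * (s - q) = (p - s) * (q - s) by ring,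
      Real.sqrt_mul (by linarith : (0:ℝ) ≤ p - s)]
  have hK3' : K3 = Real.sqrt (p - s₀) * Real.sqrt (q - s₀) := by
    rw [hK3, show (s₀ - p) * (s₀ - q) = (p - s₀) * (q - s₀) by ring,
      Real.sqrt_mul (by linarith : (0:ℝ) ≤ p - s₀)]
  -- squared-sum logs
  have e4 : Real.log ((Real.sqrt p + Real.sqrt q)^2) = 2 * Real.log (Real.sqrt p + Real.sqrt q) := by
    rw [show ((Real.sqrt p + Real.sqrt q)^2) = (Real.sqrt p + Real.sqrt q)^(2:ℕ) by norm_num,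
      Real.log_pow]
    push_cast; ring
  have e5 : Real.log ((Real.sqrt (p - s) + Real.sqrt (q - s))^2)
      = 2 * Real.log (Real.sqrt (p - s) + Real.sqrt (q - s)) := by
    rw [show ((Real.sqrt (p - s) + Real.sqrt (q - s))^2)
        = (Real.sqrt (p - s) + Real.sqrt (q - s))^(2:ℕ) by norm_num, Real.log_pow]
    push_cast; ring
  have e6 : Real.log ((Real.sqrt (p - s₀) + Real.sqrt (q - s₀))^2)
      = 2 * Real.log (Real.sqrt (p - s₀) + Real.sqrt (q - s₀)) := by
    rw [show ((Real.sqrt (p - s₀) + Real.sqrt (q - s₀))^2)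
        = (Real.sqrt (p - s₀) + Real.sqrt (q - s₀))^(2:ℕ) by norm_num, Real.log_pow]
    push_cast; ring
  -- difference logs
  have hdiff : ∀ a b : ℝ, 0 ≤ b → b < a → Real.sqrt b < Real.sqrt a →
      Real.log (Real.sqrt a - Real.sqrt b)
        = Real.log (a - b) - Real.log (Real.sqrt a + Real.sqrt b) := by
    intro a b hb hba hsq
    have ha : (0:ℝ) ≤ a := le_of_lt (lt_of_le_of_lt hb hba)
    have hprod : a - b = (Real.sqrt a + Real.sqrt b) * (Real.sqrt a - Real.sqrt b) := by
      have h1 : Real.sqrt a ^ 2 = a := Real.sq_sqrt ha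
      have h2 : Real.sqrt b ^ 2 = b := Real.sq_sqrt hb
      linear_combination h2 - h1
    rw [hprod, Real.log_mul (ne_of_gt (by nlinarith [Real.sqrt_nonneg b]))
      (sub_ne_zero.mpr hsq.ne')]
    ring
  rw [hdiff p q hq hqp hSQP, hdiff (p - s) (q - s) (by linarith) (by linarith) hSUs,
    hdiff (p - s₀) (q - s₀) (by linarith) (by linarith) hSUs₀, e4, e5, e6,
    hc1, hc2, hc3, hK1', hK2', hK3']
  have hss' : s₀ - s ≠ 0 := sub_ne_zero.mpr (Ne.symm hne)
  field_simp [hs0, hs₀0, hss, hss']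
  ring
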